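/- Let K be a natural number, γ ≥ 0 a real number, and let κ_1, …, κ_K, u_1, …, u_K, s_1, …, s_K be real numbers such that for every k ∈ {1, …, K} one has 0 ≤ κ_k ≤ u_k ≤ 1, s_k ≥ 0, and u_k − κ_k ≤ 2γ√(s_k). Then ∏_{k=1}^{K} (1 − κ_k) − ∏_{k=1}^{K} (1 − u_k) ≤ 2γ · Σ_{k=1}^{K} [∏_{i=1}^{k−1} (1 − κ_i)] · √(s_k) ≤ 2γ · Σ_{k=1}^{K} √(s_k). -/

import Mathlib

lemma aux4 (γ : ℝ) (hγ : 0 ≤ γ) (κ u s : ℕ → ℝ) (n : ℕ)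
    (h : ∀ k ∈ Finset.range n,
      0 ≤ κ k ∧ κ k ≤ u k ∧ u k ≤ 1 ∧ 0 ≤ s k ∧ u k - κ k ≤ 2 * γ * Real.sqrt (s k)) :
    (∏ k ∈ Finset.range n, (1 - κ k)) - ∏ k ∈ Finset.range n, (1 - u k) ≤
      2 * γ * ∑ k ∈ Finset.range n,
        (∏ i ∈ Finset.range k, (1 - κ i)) * Real.sqrt (s k) := by
  induction n with
  | zero => simp
  | succ n ih =>
    have hmem : ∀ k ∈ Finset.range n, k ∈ Finset.range (n+1) := by
      intro k hk; simp at hk ⊢; omega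
    have ih' := ih (fun k hk => h k (hmem k hk))
    have hn := h n (by simp)
    have hPnonneg : ∀ k ∈ Finset.range n, (0:ℝ) ≤ 1 - κ k := by
      intro k hk
      have := h k (hmem k hk)
      linarith [this.1, this.2.1, this.2.2.1]
    have hQnonneg : ∀ k ∈ Finset.range n, (0:ℝ) ≤ 1 - u k := by
      intro k hk
      have := h k (hmem k hk)
      linarith [this.2.2.1]
    have hPQ : ∏ k ∈ Finset.range n, (1 - u k) ≤ ∏ k ∈ Finset.range n, (1 - κ k) := by
      apply Finset.prod_le_prod hQnonneg
      intro k hk; have := h k (hmem k hk); linarith [this.2.1]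
    have hP0 : (0:ℝ) ≤ ∏ k ∈ Finset.range n, (1 - κ k) := Finset.prod_nonneg hPnonneg
    rw [Finset.prod_range_succ, Finset.prod_range_succ, Finset.sum_range_succ]
    set P := ∏ k ∈ Finset.range n, (1 - κ k)
    set Q := ∏ k ∈ Finset.range n, (1 - u k)
    have h1 : P * (1 - κ n) - Q * (1 - u n) = (P - Q) * (1 - u n) + P * (u n - κ n) := by ring
    have hu1 : (0:ℝ) ≤ 1 - u n := by linarith [hn.2.2.1]
    have h2 : (P - Q) * (1 - u n) ≤ P - Q := by
      nlinarith [hPQ]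
    have h3 : P * (u n - κ n) ≤ P * (2 * γ * Real.sqrt (s n)) :=
      mul_le_mul_of_nonneg_left hn.2.2.2.2 hP0
    rw [mul_add]
    calc P * (1 - κ n) - Q * (1 - u n) ≤ (P - Q) + P * (2 * γ * Real.sqrt (s n)) := by
          rw [h1]; linarith
      _ ≤ 2 * γ * ∑ k ∈ Finset.range n, (∏ i ∈ Finset.range k, (1 - κ i)) * Real.sqrt (s k)
            + 2 * γ * (P * Real.sqrt (s n)) := by
          rw [show 2 * γ * (P * Real.sqrt (s n)) = P * (2 * γ * Real.sqrt (s n)) by ring]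
          linarith [ih']

/-- Deterministic core of the per-step regret bound of `CascadeHybrid` on the
high-probability confidence event (items indexed `k = 0, …, K-1`). -/
theorem stmt4 (K : ℕ) (γ : ℝ) (hγ : 0 ≤ γ) (κ u s : ℕ → ℝ)
    (h : ∀ k ∈ Finset.range K,
      0 ≤ κ k ∧ κ k ≤ u k ∧ u k ≤ 1 ∧ 0 ≤ s k ∧ u k - κ k ≤ 2 * γ * Real.sqrt (s k)) :
    (∏ k ∈ Finset.range K, (1 - κ k)) - ∏ k ∈ Finset.range K, (1 - u k) ≤
      2 * γ * ∑ k ∈ Finset.range K,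
        (∏ i ∈ Finset.range k, (1 - κ i)) * Real.sqrt (s k) ∧
    2 * γ * ∑ k ∈ Finset.range K,
        (∏ i ∈ Finset.range k, (1 - κ i)) * Real.sqrt (s k) ≤
      2 * γ * ∑ k ∈ Finset.range K, Real.sqrt (s k) := by
  constructor
  · exact aux4 γ hγ κ u s K h
  · apply mul_le_mul_of_nonneg_left _ (by positivity)
    apply Finset.sum_le_sum
    intro k hk
    simp only [Finset.mem_range] at hk
    have hP : ∏ i ∈ Finset.range k, (1 - κ i) ≤ 1 := by
      apply Finset.prod_le_one
      · intro i hi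
        simp only [Finset.mem_range] at hi
        have := h i (Finset.mem_range.mpr (hi.trans hk))
        linarith [this.1, this.2.1, this.2.2.1]
      · intro i hi
        have := h i (Finset.mem_range.mpr ((Finset.mem_range.mp hi).trans hk))
        linarith [this.1]
    have hs : (0:ℝ) ≤ Real.sqrt (s k) := Real.sqrt_nonneg _
    nlinarith
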